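/- With e_1,...,e_r ≥ 2, sequences λ, μ, n as usual, let a_1,...,a_r be real numbers (representing A·Γ_k) with a_k ≤ 0 for all k ≥ 2, and define γ_i := (λ_i/n)·Σ_{k=1}^{i} μ_k a_k + (μ_i/n)·Σ_{k=i+1}^{r} λ_k a_k. Then: (i) γ_i ≥ λ_i γ_r for all i; (ii) all γ_i ≥ 0 together with γ_r > 0 holds if and only if Σ_{k=1}^{r} μ_k a_k > 0; and (iii) in that case 0 < γ_i < a_1 for all i. -/

import Mathlib

/-- Coefficients of E(A,Θ): with a_k ≤ 0 for k ≥ 2 and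
γ_i = (λ_i/n)Σ_{k≤i} μ_k a_k + (μ_i/n)Σ_{k>i} λ_k a_k, one has (i) γ_i ≥ λ_i γ_r;
(ii) all γ_i ≥ 0 and γ_r > 0 iff Σ μ_k a_k > 0; (iii) in that case 0 < γ_i < a_1. -/
theorem stmt9 (r : ℕ) (hr : 1 ≤ r) (e lam mu : ℕ → ℤ)
    (he : ∀ i, 1 ≤ i → i ≤ r → 2 ≤ e i)
    (hmu0 : mu 0 = 0) (hmu1 : mu 1 = 1)
    (hmu : ∀ k, 1 ≤ k → k ≤ r → mu (k + 1) = e k * mu k - mu (k - 1))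
    (hlamtop : lam (r + 1) = 0) (hlamr : lam r = 1)
    (hlam : ∀ k, 1 ≤ k → k ≤ r → lam (k - 1) = e k * lam k - lam (k + 1))
    (a : ℕ → ℝ) (ha : ∀ k, 2 ≤ k → k ≤ r → a k ≤ 0)
    (g : ℕ → ℝ)
    (hg : ∀ i, g i = (lam i : ℝ) / (mu (r + 1) : ℝ) * ∑ k ∈ Finset.Icc 1 i, (mu k : ℝ) * a k
        + (mu i : ℝ) / (mu (r + 1) : ℝ) * ∑ k ∈ Finset.Icc (i + 1) r, (lam k : ℝ) * a k) :
    (∀ i, 1 ≤ i → i ≤ r → (lam i : ℝ) * g r ≤ g i) ∧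
    (((∀ i, 1 ≤ i → i ≤ r → 0 ≤ g i) ∧ 0 < g r) ↔
      0 < ∑ k ∈ Finset.Icc 1 r, (mu k : ℝ) * a k) ∧
    (0 < ∑ k ∈ Finset.Icc 1 r, (mu k : ℝ) * a k →
      ∀ i, 1 ≤ i → i ≤ r → 0 < g i ∧ g i < a 1) := by
  -- μ is increasing: mu k ≥ k and mu (k+1) ≥ mu k + 1
  have mustep : ∀ k, k ≤ r → (k : ℤ) ≤ mu k ∧ mu k + 1 ≤ mu (k + 1) := by
    intro k
    induction k with
    | zero => intro _; simp [hmu0, hmu1]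
    | succ k ih =>
      intro hk
      have hk' : k ≤ r := by omega
      obtain ⟨h1, h2⟩ := ih hk'
      have hrec := hmu (k + 1) (by omega) hk
      simp only [Nat.add_sub_cancel] at hrec
      have he' := he (k + 1) (by omega) hk
      have hpos : 0 < mu (k + 1) := by push_cast at h1 ⊢; omega
      constructor
      · push_cast; push_cast at h1; omega
      · have h3 : 0 ≤ (e (k + 1) - 2) * mu (k + 1) :=
          mul_nonneg (by linarith) (by linarith)
        linarith
  have mu_ge : ∀ k, k ≤ r + 1 → (k : ℤ) ≤ mu k := by
    intro k hk
    rcases Nat.lt_or_ge k (r + 1) with h | h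
    · exact (mustep k (by omega)).1
    · have hk' : k = r + 1 := by omega
      subst hk'
      have := mustep r (le_refl r)
      push_cast; omega
  have n_pos : (0 : ℤ) < mu (r + 1) := by
    have := mu_ge (r + 1) (le_refl _); push_cast at this; omega
  -- λ decreasing
  have lamstep : ∀ m, m ≤ r → 0 ≤ lam (r - m + 1) ∧ lam (r - m + 1) + 1 ≤ lam (r - m) := by
    intro m
    induction m with
    | zero => intro _; simp [hlamtop, hlamr]
    | succ m ih =>
      intro hm
      have hm' : m ≤ r := by omega
      obtain ⟨h1, h2⟩ := ih hm'
      have hk1 : 1 ≤ r - m := by omega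
      have hkr : r - m ≤ r := by omega
      have hrec := hlam (r - m) hk1 hkr
      have he' := he (r - m) hk1 hkr
      have hsub : r - (m + 1) = r - m - 1 := by omega
      have hsub2 : r - m - 1 + 1 = r - m := by omega
      rw [hsub, hsub2]
      constructor
      · linarith
      · have h3 : 0 ≤ (e (r - m) - 2) * lam (r - m) :=
          mul_nonneg (by linarith) (by linarith)
        linarith
  have lam_facts : ∀ k, k ≤ r → 0 ≤ lam (k + 1) ∧ lam (k + 1) + 1 ≤ lam k := by
    intro k hk
    have := lamstep (r - k) (by omega)
    rwa [show r - (r - k) = k from by omega] at this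
  have lam_ge1 : ∀ k, k ≤ r → 1 ≤ lam k := by
    intro k hk; have := lam_facts k hk; omega
  have lam_nonneg : ∀ k, k ≤ r + 1 → 0 ≤ lam k := by
    intro k hk
    rcases Nat.lt_or_ge k (r + 1) with h | h
    · linarith [lam_ge1 k (by omega)]
    · have : k = r + 1 := by omega
      rw [this, hlamtop]
  have lam_mono : ∀ i k, i ≤ k → k ≤ r + 1 → lam k ≤ lam i := by
    intro i k hik
    induction k, hik using Nat.le_induction with
    | base => intro _; exact le_refl _
    | succ k hik ih =>
      intro hk
      have hkr : k ≤ r := by omega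
      have := lam_facts k hkr
      linarith [ih (by omega)]
  -- determinant identity
  have det : ∀ m, m ≤ r → lam (r - m) * mu (r - m + 1) - lam (r - m + 1) * mu (r - m) = mu (r + 1) := by
    intro m
    induction m with
    | zero => intro _; simp [hlamr, hlamtop]
    | succ m ih =>
      intro hm
      have hm' : m ≤ r := by omega
      have ihh := ih hm'
      have hk1 : 1 ≤ r - m := by omega
      have hkr : r - m ≤ r := by omega
      have h1 := hlam (r - m) hk1 hkr
      have h2 := hmu (r - m) hk1 hkr
      have hsub : r - (m + 1) = r - m - 1 := by omega
      have hsub2 : r - m - 1 + 1 = r - m := by omega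
      rw [hsub, hsub2, h1]
      rw [h2] at ihh
      linear_combination ihh
  have lam0 : lam 0 = mu (r + 1) := by
    have := det r (le_refl r)
    rw [show r - r = 0 from by omega] at this
    simp [hmu0, hmu1] at this
    omega
  -- cross inequality: lam k * mu i ≤ lam i * mu k for 1 ≤ i ≤ k ≤ r
  have crossaux : ∀ i, 1 ≤ i → i ≤ r → ∀ k, i ≤ k → k ≤ r →
      0 ≤ lam i * mu k - lam k * mu i ∧
      lam i * mu k - lam k * mu i ≤ lam i * mu (k + 1) - lam (k + 1) * mu i := by
    intro i hi1 hir k hik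
    induction k, hik using Nat.le_induction with
    | base =>
      intro _
      have hd := det (r - i) (by omega)
      rw [show r - (r - i) = i from by omega] at hd
      constructor
      · linarith [le_refl (lam i * mu i)]
      · nlinarith [n_pos]
    | succ k hik ih =>
      intro hk1
      have hkr : k ≤ r := by omega
      obtain ⟨p1, p2⟩ := ih hkr
      have h1 := hlam (k + 1) (by omega) hk1
      simp only [Nat.add_sub_cancel] at h1
      have h2 := hmu (k + 1) (by omega) hk1
      simp only [Nat.add_sub_cancel] at h2
      have he' := he (k + 1) (by omega) hk1
      have hx1 : 0 ≤ lam i * mu (k + 1) - lam (k + 1) * mu i := by linarith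
      refine ⟨hx1, ?_⟩
      have hx : lam i * mu (k + 2) - lam (k + 2) * mu i =
          e (k + 1) * (lam i * mu (k + 1) - lam (k + 1) * mu i) - (lam i * mu k - lam k * mu i) := by
        linear_combination lam i * h2 - mu i * h1
      have h3 : 0 ≤ (e (k + 1) - 2) * (lam i * mu (k + 1) - lam (k + 1) * mu i) :=
        mul_nonneg (by linarith) hx1
      have : k + 1 + 1 = k + 2 := rfl
      rw [this, hx]
      linarith

  have cross : ∀ i k, 1 ≤ i → i ≤ k → k ≤ r → lam k * mu i ≤ lam i * mu k := by
    intro i k h1 h2 h3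
    have := (crossaux i h1 (le_trans h2 h3) k h2 h3).1
    linarith
  have hnR : (0 : ℝ) < (mu (r + 1) : ℝ) := by exact_mod_cast n_pos
  have hIcc : ∀ j : ℕ, Finset.Icc 1 j = Finset.Ioc 0 j := fun j => Finset.Icc_add_one_left_eq_Ioc 0 j
  have hgr : g r * (mu (r + 1) : ℝ) = ∑ k ∈ Finset.Ioc 0 r, (mu k : ℝ) * a k := by
    rw [hg r, hlamr, show Finset.Icc (r + 1) r = ∅ from Finset.Icc_eq_empty (by omega), hIcc r]
    rw [Finset.sum_empty]
    push_cast
    field_simp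
    simp
  have keyi : ∀ i, 1 ≤ i → i ≤ r → g i * (mu (r + 1) : ℝ) =
      (lam i : ℝ) * (∑ k ∈ Finset.Ioc 0 i, (mu k : ℝ) * a k)
      + (mu i : ℝ) * (∑ k ∈ Finset.Ioc i r, (lam k : ℝ) * a k) := by
    intro i h1 h2
    rw [hg i, hIcc i, show Finset.Icc (i + 1) r = Finset.Ioc i r from Finset.Icc_add_one_left_eq_Ioc i r]
    field_simp
  have parti : ∀ i, 1 ≤ i → i ≤ r → (lam i : ℝ) * g r ≤ g i := by
    intro i h1 h2
    have hsplit : (∑ k ∈ Finset.Ioc 0 i, (mu k : ℝ) * a k)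
        + ∑ k ∈ Finset.Ioc i r, (mu k : ℝ) * a k = ∑ k ∈ Finset.Ioc 0 r, (mu k : ℝ) * a k :=
      Finset.sum_Ioc_consecutive _ (Nat.zero_le i) h2
    have hX : (lam i : ℝ) * (∑ k ∈ Finset.Ioc i r, (mu k : ℝ) * a k)
        ≤ (mu i : ℝ) * (∑ k ∈ Finset.Ioc i r, (lam k : ℝ) * a k) := by
      rw [Finset.mul_sum, Finset.mul_sum]
      apply Finset.sum_le_sum
      intro k hk
      rw [Finset.mem_Ioc] at hk
      have hak : a k ≤ 0 := ha k (by omega) hk.2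
      have hc := cross i k h1 (le_of_lt hk.1) hk.2
      have hcR : (lam k : ℝ) * (mu i : ℝ) ≤ (lam i : ℝ) * (mu k : ℝ) := by exact_mod_cast hc
      nlinarith [mul_nonneg (sub_nonneg.mpr hcR) (neg_nonneg.mpr hak)]
    have e1 := keyi i h1 h2
    have hnn : (lam i : ℝ) * g r * (mu (r + 1) : ℝ) ≤ g i * (mu (r + 1) : ℝ) := by
      rw [e1]
      have : (lam i : ℝ) * g r * (mu (r + 1) : ℝ)
          = (lam i : ℝ) * ((∑ k ∈ Finset.Ioc 0 i, (mu k : ℝ) * a k)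
            + ∑ k ∈ Finset.Ioc i r, (mu k : ℝ) * a k) := by
        rw [hsplit, ← hgr]; ring
      rw [this]
      nlinarith [hX]
    exact le_of_mul_le_mul_right hnn hnR
  have hgrpos : 0 < ∑ k ∈ Finset.Icc 1 r, (mu k : ℝ) * a k → 0 < g r := by
    intro hS
    rw [hIcc r, ← hgr] at hS
    nlinarith [hnR]
  refine ⟨parti, ⟨?_, ?_⟩, ?_⟩
  · rintro ⟨_, hgrp⟩
    have hp : 0 < g r * (mu (r + 1) : ℝ) := mul_pos hgrp hnR
    rw [hgr] at hp
    rwa [hIcc r]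
  · intro hS
    have hgrp := hgrpos hS
    refine ⟨fun i h1 h2 => ?_, hgrp⟩
    have hp := parti i h1 h2
    have hl : (1 : ℝ) ≤ (lam i : ℝ) := by exact_mod_cast lam_ge1 i h2
    nlinarith [mul_le_mul_of_nonneg_right hl hgrp.le]
  · intro hS i h1 h2
    have hgrp := hgrpos hS
    have hl : (1 : ℝ) ≤ (lam i : ℝ) := by exact_mod_cast lam_ge1 i h2
    have hgi : 0 < g i :=
      lt_of_lt_of_le (by nlinarith [mul_le_mul_of_nonneg_right hl hgrp.le]) (parti i h1 h2)
    refine ⟨hgi, ?_⟩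
    rw [hIcc r] at hS
    have hIoc01 : Finset.Ioc 0 1 = ({1} : Finset ℕ) := by
      ext x; simp only [Finset.mem_Ioc, Finset.mem_singleton]; omega
    have hsum_nonpos : ∀ l : ℕ, l ≤ r → (∑ k ∈ Finset.Ioc 1 l, (mu k : ℝ) * a k) ≤ 0 := by
      intro l hll
      apply Finset.sum_nonpos
      intro k hk
      rw [Finset.mem_Ioc] at hk
      have hak := ha k (by omega) (le_trans hk.2 hll)
      have hmk : (0 : ℤ) ≤ mu k := le_trans (by positivity) (mu_ge k (by omega))
      have hmkR : (0 : ℝ) ≤ (mu k : ℝ) := by exact_mod_cast hmk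
      exact mul_nonpos_of_nonneg_of_nonpos hmkR hak
    have hTnonpos : (∑ k ∈ Finset.Ioc i r, (lam k : ℝ) * a k) ≤ 0 := by
      apply Finset.sum_nonpos
      intro k hk
      rw [Finset.mem_Ioc] at hk
      have hak := ha k (by omega) hk.2
      have hlk : (0 : ℝ) ≤ (lam k : ℝ) := by exact_mod_cast lam_nonneg k (by omega)
      exact mul_nonpos_of_nonneg_of_nonpos hlk hak
    have hsum01 : (∑ k ∈ Finset.Ioc 0 1, (mu k : ℝ) * a k) = a 1 := by
      rw [hIoc01, Finset.sum_singleton, hmu1]; push_cast; ring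
    have hsplit1 : (∑ k ∈ Finset.Ioc 0 1, (mu k : ℝ) * a k)
        + ∑ k ∈ Finset.Ioc 1 r, (mu k : ℝ) * a k = ∑ k ∈ Finset.Ioc 0 r, (mu k : ℝ) * a k :=
      Finset.sum_Ioc_consecutive _ (by omega) hr
    have ha1 : 0 < a 1 := by
      have := hsum_nonpos r (le_refl r)
      rw [hsum01] at hsplit1
      linarith
    have hsplit2 : (∑ k ∈ Finset.Ioc 0 1, (mu k : ℝ) * a k)
        + ∑ k ∈ Finset.Ioc 1 i, (mu k : ℝ) * a k = ∑ k ∈ Finset.Ioc 0 i, (mu k : ℝ) * a k :=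
      Finset.sum_Ioc_consecutive _ (by omega) h1
    have hmi : (0 : ℝ) ≤ (mu i : ℝ) := by
      exact_mod_cast le_trans (by positivity) (mu_ge i (by omega))
    have hli0 : (0 : ℝ) ≤ (lam i : ℝ) := by linarith
    have e1 := keyi i h1 h2
    have hub : g i * (mu (r + 1) : ℝ) ≤ (lam i : ℝ) * a 1 := by
      rw [e1, ← hsplit2, hsum01]
      have hIoc1i := hsum_nonpos i h2
      nlinarith [mul_nonpos_of_nonneg_of_nonpos hli0 hIoc1i,
        mul_nonpos_of_nonneg_of_nonpos hmi hTnonpos]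
    have hlub : (lam i : ℝ) ≤ (mu (r + 1) : ℝ) - 1 := by
      have l1 : lam i ≤ lam 1 := lam_mono 1 i h1 (by omega)
      have l2 : lam 1 + 1 ≤ lam 0 := by simpa using (lam_facts 0 (by omega)).2
      have l3 : lam i + 1 ≤ mu (r + 1) := by omega
      have l4 : ((lam i : ℤ) : ℝ) + 1 ≤ ((mu (r + 1) : ℤ) : ℝ) := by exact_mod_cast l3
      linarith
    have final : g i * (mu (r + 1) : ℝ) < a 1 * (mu (r + 1) : ℝ) := by
      nlinarith [mul_nonneg (by linarith : (0:ℝ) ≤ (mu (r + 1) : ℝ) - 1 - (lam i : ℝ)) ha1.le]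
    exact lt_of_mul_lt_mul_right final hnR.le
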